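/- arXiv:1112.6069 — 2 statements merged into one kernel-verified Lean document; each statement's English description precedes it below -/
import Mathlib

section
/- Let A be a C*-algebra and x ∈ A an element lying in the Pedersen ideal of A (e.g., x = exe for a positive e ∈ A). If f ∈ A₊ is a full element (the closed two-sided ideal generated by f is all of A), then x can be written as a finite sum x = ∑_{i=1}^m aᵢ f bᵢ with aᵢ, bᵢ ∈ A. -/
/-- If `x` lies in the Pedersen ideal of a C*-algebra `A` (e.g. `e x = x e = x` for some
positive `e`), and `f` is a full positive element (the closed two-sided ideal generated
by `f` is all of `A`), then `x = ∑_{i=1}^m aᵢ f bᵢ` for some `aᵢ, bᵢ ∈ A`. -/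
theorem stmt_9 {A : Type*} [NonUnitalCStarAlgebra A] [PartialOrder A] [StarOrderedRing A]
    (x : A) (e : A) (he : 0 ≤ e) (hex : e * x = x) (hxe : x * e = x)
    (f : A) (hf : 0 ≤ f)
    (hfull : ∀ I : TwoSidedIdeal A, IsClosed (I : Set A) → f ∈ I → ∀ y : A, y ∈ I) :
    ∃ (m : ℕ) (a b : Fin m → A), x = ∑ i, a i * f * b i := by
  classical
  set T : Set A := {z | ∃ (m : ℕ) (a b : Fin m → A), z = ∑ i, a i * f * b i} with hT
  have hzero : (0 : A) ∈ T := ⟨0, ![], ![], by simp⟩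
  have hadd : ∀ {z w : A}, z ∈ T → w ∈ T → z + w ∈ T := by
    rintro z w ⟨m, a, b, rfl⟩ ⟨m', a', b', rfl⟩
    refine ⟨m + m', Fin.append a a', Fin.append b b', ?_⟩
    rw [Fin.sum_univ_add]
    simp [Fin.append_left, Fin.append_right]
  have hneg : ∀ {z : A}, z ∈ T → -z ∈ T := by
    rintro z ⟨m, a, b, rfl⟩
    exact ⟨m, fun i => -(a i), b, by simp [Finset.sum_neg_distrib]⟩
  have hml : ∀ (y : A) {z : A}, z ∈ T → y * z ∈ T := by
    rintro y z ⟨m, a, b, rfl⟩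
    exact ⟨m, fun i => y * a i, b, by rw [Finset.mul_sum]; simp [mul_assoc]⟩
  have hmr : ∀ (y : A) {z : A}, z ∈ T → z * y ∈ T := by
    rintro y z ⟨m, a, b, rfl⟩
    exact ⟨m, a, fun i => b i * y, by rw [Finset.sum_mul]; simp [mul_assoc]⟩
  -- the closure of `T` is a closed two-sided ideal
  let K : TwoSidedIdeal A := TwoSidedIdeal.mk' (closure T)
    (subset_closure hzero)
    (fun hx hy => map_mem_closure₂ continuous_add hx hy fun _ ha _ hb => hadd ha hb)
    (fun hx => map_mem_closure continuous_neg hx fun _ ha => hneg ha)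
    (fun {y z} hz => map_mem_closure (continuous_mul_left y) hz fun _ ha => hml y ha)
    (fun {y z} hy => map_mem_closure (f := fun b => b * z) (continuous_mul_right z) hy
      fun _ ha => hmr z ha)
  have hsa : IsSelfAdjoint f := hf.isSelfAdjoint
  -- `f` lies in the closure of `T`
  have hfK : f ∈ closure T := by
    rw [Metric.mem_closure_iff]
    intro ε hε
    set δ : ℝ := ε / 2 with hδdef
    have hδ : 0 < δ := by positivity
    set g : ℝ → ℝ := fun t => min (t / δ) 1 with hg
    have hgc : Continuous g := (continuous_id.div_const δ).min continuous_const
    have hg0 : g 0 = 0 := by simp [hg, hδ.le]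
    set m : A := cfcₙ g f with hm
    have hgcOn : ContinuousOn g (quasispectrum ℝ f) := hgc.continuousOn
    have htg : ContinuousOn (fun t : ℝ => t * g t) (quasispectrum ℝ f) :=
      (continuous_id.mul hgc).continuousOn
    have htg0 : (fun t : ℝ => t * g t) 0 = 0 := by simp
    have hprod : ContinuousOn (fun t : ℝ => g t * (t * g t)) (quasispectrum ℝ f) :=
      (hgc.mul (continuous_id.mul hgc)).continuousOn
    have hprod0 : (fun t : ℝ => g t * (t * g t)) 0 = 0 := by simp [hg0]
    have hA : cfcₙ (fun t : ℝ => g t * (t * g t)) f = cfcₙ g f * cfcₙ (fun t : ℝ => t * g t) f :=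
      cfcₙ_mul g (fun t => t * g t) f hgcOn hg0 htg htg0
    have hB : cfcₙ (fun t : ℝ => t * g t) f = f * cfcₙ g f := by
      have h := cfcₙ_mul (id : ℝ → ℝ) g f continuous_id.continuousOn rfl hgcOn hg0
      rw [cfcₙ_id ℝ f] at h
      exact h
    have h1 : cfcₙ (fun t : ℝ => g t * (t * g t)) f = m * (f * m) := by
      rw [hA, hB, hm]
    have h2 : f - m * (f * m) = cfcₙ (fun t : ℝ => t - g t * (t * g t)) f := by
      have h := cfcₙ_sub (id : ℝ → ℝ) (fun t => g t * (t * g t)) f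
        continuous_id.continuousOn rfl hprod hprod0
      rw [cfcₙ_id ℝ f, h1] at h
      exact h.symm
    have h3 : ‖f - m * (f * m)‖ ≤ δ := by
      rw [h2]
      refine norm_cfcₙ_le fun t ht => ?_
      have ht0 : 0 ≤ t := quasispectrum_nonneg_of_nonneg f hf t ht
      have hg0' : 0 ≤ g t := le_min (by positivity) zero_le_one
      have hg1 : g t ≤ 1 := min_le_right _ _
      rcases le_total t δ with h | h
      · have k1 : 0 ≤ g t * (t * g t) := mul_nonneg hg0' (mul_nonneg ht0 hg0')
        have k2 : g t * (t * g t) ≤ t := by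
          nlinarith [mul_nonneg (mul_nonneg ht0 (sub_nonneg.mpr hg1))
            (by linarith : (0:ℝ) ≤ 1 + g t)]
        rw [Real.norm_eq_abs, abs_le]
        constructor <;> linarith
      · have hgt : g t = 1 := min_eq_right ((one_le_div hδ).mpr h)
        rw [hgt]
        simpa using hδ.le
    refine ⟨m * (f * m), ⟨1, ![m], ![m], by simp [mul_assoc]⟩, ?_⟩
    rw [dist_eq_norm]
    calc ‖f - m * (f * m)‖ ≤ δ := h3
    _ < ε := by rw [hδdef]; linarith
  -- apply fullness to get `e` in the closure of `T`
  have heK : e ∈ closure T := by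
    have := hfull K (by rw [TwoSidedIdeal.coe_mk']; exact isClosed_closure)
      ((TwoSidedIdeal.mem_mk' _ _ _ _ _ _ f).mpr hfK) e
    exact (TwoSidedIdeal.mem_mk' _ _ _ _ _ _ e).mp this
  -- pick `c ∈ T` close to `e`
  set δ₀ : ℝ := (‖e‖ ^ 2 + 1)⁻¹ with hδ₀def
  have hδ₀ : 0 < δ₀ := by positivity
  obtain ⟨c, hcT, hcd⟩ := Metric.mem_closure_iff.mp heK δ₀ hδ₀
  set c' : A := e * (c * e) with hc'
  have hc'T : c' ∈ T := hml e (hmr e hcT)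
  set t : A := c' - e * (e * e) with htdef
  have ht : ‖t‖ < 1 := by
    have h1 : t = e * ((c - e) * e) := by rw [htdef, hc']; noncomm_ring
    have h2 : ‖t‖ ≤ ‖e‖ * (‖c - e‖ * ‖e‖) := by
      rw [h1]
      calc ‖e * ((c - e) * e)‖ ≤ ‖e‖ * ‖(c - e) * e‖ := norm_mul_le _ _
      _ ≤ ‖e‖ * (‖c - e‖ * ‖e‖) := by
          gcongr; exact norm_mul_le _ _
    have h3 : ‖c - e‖ < δ₀ := by
      rw [← norm_sub_rev]; rw [dist_eq_norm] at hcd; exact hcd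
    have h4 : ‖e‖ * (‖c - e‖ * ‖e‖) ≤ ‖e‖ ^ 2 * δ₀ := by nlinarith [norm_nonneg (c - e), norm_nonneg e]
    have h5 : ‖e‖ ^ 2 * δ₀ < 1 := by
      rw [hδ₀def]
      rw [mul_inv_lt_iff₀ (by positivity)]
      linarith
    linarith
  have hx3 : e * (e * (e * x)) = x := by rw [hex, hex, hex]
  have hxt : x + t * x = c' * x := by
    have hx3' : e * (e * e) * x = x := by simp only [mul_assoc, hex]
    rw [htdef, sub_mul, hx3']
    abel
  -- pass to the unitization and invert `1 + t`
  have htU : ‖(-(t : Unitization ℂ A))‖ < 1 := by rwa [norm_neg, Unitization.norm_inr]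
  let u : (Unitization ℂ A)ˣ := Units.oneSub (-(t : Unitization ℂ A)) htU
  have huval : (u : Unitization ℂ A) = 1 + (t : Unitization ℂ A) := by
    show (1 : Unitization ℂ A) - (-(t : Unitization ℂ A)) = 1 + (t : Unitization ℂ A); rw [sub_neg_eq_add]
  set w : A := (↑u⁻¹ : Unitization ℂ A).snd with hw
  have hufst : (↑u⁻¹ : Unitization ℂ A).fst = 1 := by
    have h := congrArg (fun y : Unitization ℂ A => y.fst) u.mul_inv
    rw [Unitization.fst_mul, Unitization.fst_one, huval] at h
    simpa [Unitization.fst_add, Unitization.fst_inr, Unitization.fst_one] using h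
  have huinv : (↑u⁻¹ : Unitization ℂ A) = 1 + (w : Unitization ℂ A) := by
    conv_lhs => rw [← Unitization.inl_fst_add_inr_snd_eq (↑u⁻¹ : Unitization ℂ A)]
    rw [hufst, Unitization.inl_one]
  have key : (x : Unitization ℂ A) = ((c' * x + w * (c' * x) : A) : Unitization ℂ A) := by
    have h0 : (x : Unitization ℂ A) = ↑u⁻¹ * (↑u * (x : Unitization ℂ A)) := by
      rw [← mul_assoc, u.inv_mul, one_mul]
    rw [h0, huval, huinv]
    have h1 : ((1 : Unitization ℂ A) + (t : Unitization ℂ A)) * (x : Unitization ℂ A) = ((c' * x : A) : Unitization ℂ A) := by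
      rw [add_mul, one_mul, ← Unitization.inr_mul, ← Unitization.inr_add, hxt]
    rw [h1, add_mul, one_mul, ← Unitization.inr_mul, ← Unitization.inr_add]
  have hxT : x ∈ T := by
    have := Unitization.inr_injective (R := ℂ) key
    rw [this]
    exact hadd (hmr x hc'T) (hml w (hmr x hc'T))
  exact hxT
end

section
/- Let A be a C*-algebra in which every element is a limit of products of two nilpotent elements. Then in the unitization A~, every element of A is a limit of invertible elements of A~. -/
set_option maxHeartbeats 800000 in
set_option synthInstance.maxHeartbeats 200000 in
open Filter in
lemma nilp_mem_closure_units {A : Type*} [NonUnitalCStarAlgebra A]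
    (a : Unitization ℂ A) (ha : IsNilpotent a) :
    a ∈ closure {u : Unitization ℂ A | IsUnit u} := by
  have hc : Tendsto (fun k : ℕ => ((((k : ℝ) + 1)⁻¹ : ℝ) : ℂ)) atTop (nhds 0) := by
    have := (Complex.continuous_ofReal.tendsto 0).comp tendsto_one_div_add_atTop_nhds_zero_nat
    simpa [Function.comp_def] using this
  have hcont := (continuous_algebraMap ℂ (Unitization ℂ A)).tendsto 0
  have htend : Tendsto
      (fun k : ℕ => a + algebraMap ℂ (Unitization ℂ A) ((((k : ℝ) + 1)⁻¹ : ℝ) : ℂ))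
      atTop (nhds a) := by
    have h1 := (hcont.comp hc).const_add a
    simpa [Function.comp_def] using h1
  refine mem_closure_of_tendsto htend (Filter.Eventually.of_forall fun k => ?_)
  have hne : ((((k : ℝ) + 1)⁻¹ : ℝ) : ℂ) ≠ 0 := by
    simp only [ne_eq, Complex.ofReal_eq_zero]
    positivity
  have hu : IsUnit (algebraMap ℂ (Unitization ℂ A) ((((k : ℝ) + 1)⁻¹ : ℝ) : ℂ)) :=
    (IsUnit.mk0 _ hne).map (algebraMap ℂ (Unitization ℂ A))
  exact ha.isUnit_add_right_of_commute hu ((Algebra.commutes _ a).symm)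

set_option maxHeartbeats 800000 in
set_option synthInstance.maxHeartbeats 200000 in
open Filter in
/-- If every element of a C*-algebra `A` is a limit of products of two nilpotent
elements, then every element of `A` is a limit of invertible elements of the
unitization `A⁺`. (Nilpotency of an element of the possibly non-unital algebra `A`
is expressed via its image in the unitization.) -/
theorem stmt_12 {A : Type*} [NonUnitalCStarAlgebra A]
    (h : ∀ x : A, ∃ y z : ℕ → A,
      (∀ n, IsNilpotent (y n : Unitization ℂ A)) ∧
      (∀ n, IsNilpotent (z n : Unitization ℂ A)) ∧
      Tendsto (fun n => y n * z n) atTop (nhds x)) :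
    ∀ x : A, (x : Unitization ℂ A) ∈ closure {u : Unitization ℂ A | IsUnit u} := by
  intro x
  obtain ⟨y, z, hy, hz, hlim⟩ := h x
  let M : Submonoid (Unitization ℂ A) :=
    { carrier := {u | IsUnit u}
      mul_mem' := fun ha hb => ha.mul hb
      one_mem' := isUnit_one }
  have hclosed : IsClosed (closure {u : Unitization ℂ A | IsUnit u}) := isClosed_closure
  have hmem : ∀ n, ((y n * z n : A) : Unitization ℂ A) ∈
      closure {u : Unitization ℂ A | IsUnit u} := by
    intro n
    rw [Unitization.inr_mul]
    exact M.topologicalClosure.mul_mem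
      (nilp_mem_closure_units _ (hy n)) (nilp_mem_closure_units _ (hz n))
  have hcont : Tendsto (fun n => ((y n * z n : A) : Unitization ℂ A)) atTop
      (nhds (x : Unitization ℂ A)) :=
    (Unitization.continuous_inr (𝕜 := ℂ) (A := A)).continuousAt.tendsto.comp hlim
  exact hclosed.mem_of_tendsto hcont (Filter.Eventually.of_forall hmem)
end
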